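/- Let k be any field and let A be a finite-dimensional unital division algebra over k. Then the right nucleus N = N_r(A) is a unital associative subalgebra of A in which every nonzero element is invertible (a skew field over k); A is a right vector space over N, the module structure being given by the multiplication of A; and dim_k(A) = dim_N(A) · dim_k(N). If in addition dim_k(N) = 2, then N is commutative, i.e., a field. -/
import Mathlib


open Module Function

variable {k : Type} [Field k]

/-- The right nucleus `N_r(A)` as a `k`-subspace of `A`. -/
def rightNucleusSub {A : Type} [AddCommGroup A] [Module k A]
    (mul : A →ₗ[k] A →ₗ[k] A) : Submodule k A where
  carrier := {z | ∀ x y : A, mul (mul x y) z = mul x (mul y z)}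
  add_mem' := by
    intro a b ha hb
    intro x y
    simp only [map_add]
    rw [ha x y, hb x y]
  zero_mem' := by
    intro x y
    simp only [map_zero]
  smul_mem' := by
    intro t z hz
    intro x y
    simp only [map_smul]
    rw [hz x y]

/-- Let `k` be any field and `A` a finite-dimensional unital division algebra
over `k`. Then the right nucleus `N = N_r(A)` is a unital associative subalgebra of `A` in
which every nonzero element is invertible (a skew field over `k`); `A` is a free right
`N`-vector space (module structure given by the multiplication of `A`), with
`dim_k(A) = dim_N(A) · dim_k(N)`; and if `dim_k(N) = 2`, then `N` is commutative. -/
theorem rightNucleus_skewField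
    (A : Type) [AddCommGroup A] [Module k A] [FiniteDimensional k A]
    (mul : A →ₗ[k] A →ₗ[k] A) (one : A)
    (hA : ∃ x : A, x ≠ 0)
    (hone : ∀ x : A, mul one x = x ∧ mul x one = x)
    (hdiv : ∀ a : A, a ≠ 0 →
      Function.Bijective (fun x => mul a x) ∧ Function.Bijective (fun x => mul x a)) :
    -- N is a unital associative subalgebra
    one ∈ rightNucleusSub mul ∧
    (∀ z ∈ rightNucleusSub mul, ∀ w ∈ rightNucleusSub mul, mul z w ∈ rightNucleusSub mul) ∧
    (∀ z ∈ rightNucleusSub mul, ∀ w ∈ rightNucleusSub mul, ∀ v ∈ rightNucleusSub mul,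
      mul (mul z w) v = mul z (mul w v)) ∧
    -- every nonzero element of N is invertible in N
    (∀ z ∈ rightNucleusSub mul, z ≠ 0 →
      ∃ w ∈ rightNucleusSub mul, mul z w = one ∧ mul w z = one) ∧
    -- A is a free right N-vector space and the dimension formula holds
    (∃ n : ℕ, ∃ b : Fin n → A,
      (∀ x : A, ∃! f : Fin n → A, (∀ i, f i ∈ rightNucleusSub mul) ∧
        x = ∑ i, mul (b i) (f i)) ∧
      finrank k A = n * finrank k ↥(rightNucleusSub mul)) ∧
    -- if dim_k N = 2 then N is commutative
    (finrank k ↥(rightNucleusSub mul) = 2 →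
      ∀ z ∈ rightNucleusSub mul, ∀ w ∈ rightNucleusSub mul, mul z w = mul w z) := by
  classical
  obtain ⟨x0, hx0⟩ := hA
  have hone0 : one ≠ 0 := by
    intro h
    apply hx0
    rw [← (hone x0).1, h]
    simp
  have h1 : one ∈ rightNucleusSub mul := by
    intro x y
    rw [(hone y).2, (hone (mul x y)).2]
  have h2 : ∀ z ∈ rightNucleusSub mul, ∀ w ∈ rightNucleusSub mul,
      mul z w ∈ rightNucleusSub mul := by
    intro z hz w hw x y
    rw [← hw (mul x y) z, hz x y, hw x (mul y z), hw y z]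
  have h4 : ∀ z ∈ rightNucleusSub mul, z ≠ 0 →
      ∃ w ∈ rightNucleusSub mul, mul z w = one ∧ mul w z = one := by
    intro z hz hz0
    obtain ⟨w, hw1⟩ := (hdiv z hz0).1.2 one
    simp only at hw1
    have hwz : mul w z = one := by
      apply (hdiv z hz0).1.1
      show mul z (mul w z) = mul z one
      rw [← hz z w, hw1, (hone z).1, (hone z).2]
    have hwN : w ∈ rightNucleusSub mul := by
      intro x y
      apply (hdiv z hz0).2.1
      show mul (mul (mul x y) w) z = mul (mul x (mul y w)) z
      rw [hz (mul x y) w, hwz, (hone (mul x y)).2, hz x (mul y w), hz y w, hwz, (hone y).2]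
    exact ⟨w, hwN, hw1, hwz⟩
  -- the ring structure (opposite multiplication) on the right nucleus
  letI nR : Ring ↥(rightNucleusSub mul) :=
    { (inferInstance : AddCommGroup ↥(rightNucleusSub mul)) with
      mul := fun z w => ⟨mul w.1 z.1, h2 w.1 w.2 z.1 z.2⟩
      one := ⟨one, h1⟩
      mul_assoc := fun a b c => Subtype.ext (a.2 c.1 b.1).symm
      one_mul := fun a => Subtype.ext ((hone a.1).2)
      mul_one := fun a => Subtype.ext ((hone a.1).1)
      left_distrib := fun a b c =>
        Subtype.ext (show mul (b.1 + c.1) a.1 = mul b.1 a.1 + mul c.1 a.1 by simp)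
      right_distrib := fun a b c =>
        Subtype.ext (show mul c.1 (a.1 + b.1) = mul c.1 a.1 + mul c.1 b.1 by simp)
      zero_mul := fun a => Subtype.ext (show mul a.1 (0 : A) = 0 by simp)
      mul_zero := fun a => Subtype.ext (show mul (0 : A) a.1 = 0 by simp) }
  haveI : Nontrivial ↥(rightNucleusSub mul) :=
    ⟨⟨⟨one, h1⟩, 0, by simp [Subtype.ext_iff, hone0]⟩⟩
  letI nDR : DivisionRing ↥(rightNucleusSub mul) :=
    DivisionRing.ofIsUnitOrEqZero (fun a => by
      rcases eq_or_ne a 0 with h | h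
      · exact Or.inr h
      · left
        have ha0 : (a : A) ≠ 0 := fun hh => h (Subtype.ext hh)
        obtain ⟨w, hwN, hw1, hw2⟩ := h4 a.1 a.2 ha0
        exact ⟨⟨a, ⟨w, hwN⟩, Subtype.ext hw2, Subtype.ext hw1⟩, rfl⟩)
  letI nMod : Module ↥(rightNucleusSub mul) A :=
    { smul := fun n x => mul x n.1
      one_smul := fun x => (hone x).2
      mul_smul := fun n m x => (n.2 x m.1).symm
      smul_zero := fun n => by show mul 0 n.1 = 0; simp
      smul_add := fun n x y => by show mul (x + y) n.1 = mul x n.1 + mul y n.1; simp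
      add_smul := fun n m x => by
        show mul x (n.1 + m.1) = mul x n.1 + mul x m.1; simp
      zero_smul := fun x => by show mul x 0 = 0; simp }
  haveI nTower : IsScalarTower k ↥(rightNucleusSub mul) A :=
    ⟨fun r n x => by
      show mul x ((r • n : ↥(rightNucleusSub mul)) : A) = r • mul x (n : A)
      rw [Submodule.coe_smul, map_smul]⟩
  haveI nFin : Module.Finite ↥(rightNucleusSub mul) A := by
    obtain ⟨S, hS⟩ := Module.Finite.fg_top (R := k) (M := A)
    refine ⟨⟨S, top_unique fun x _ => ?_⟩⟩
    have hx : x ∈ Submodule.span k (S : Set A) := hS ▸ Submodule.mem_top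
    exact Submodule.span_le_restrictScalars k ↥(rightNucleusSub mul) (S : Set A) hx
  refine ⟨h1, h2, fun z hz w hw v hv => hv z w, h4, ?_, ?_⟩
  · -- free module and dimension formula
    refine ⟨finrank ↥(rightNucleusSub mul) A,
      fun i => Module.finBasis ↥(rightNucleusSub mul) A i, fun x => ?_, ?_⟩
    · set b := Module.finBasis ↥(rightNucleusSub mul) A with hb
      refine ⟨fun i => ((b.repr x) i : A), ⟨fun i => ((b.repr x) i).2, ?_⟩, ?_⟩
      · exact (Basis.sum_repr b x).symm
      · rintro g ⟨hg1, hg2⟩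
        have hx : x = ∑ i, (⟨g i, hg1 i⟩ : ↥(rightNucleusSub mul)) • b i := hg2
        have h5 := b.repr_sum_self (fun i => (⟨g i, hg1 i⟩ : ↥(rightNucleusSub mul)))
        rw [← hx] at h5
        funext i
        have h6 := congrFun h5 i
        exact congrArg Subtype.val h6.symm
    · rw [← Module.finrank_mul_finrank k ↥(rightNucleusSub mul) A, Nat.mul_comm]
  · -- dim 2 implies commutative
    intro hdim z hz w hw
    by_cases hzsp : ∃ r : k, z = r • one
    · obtain ⟨r, rfl⟩ := hzsp
      simp [map_smul, (hone w).1, (hone w).2]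
    · set E : ↥(rightNucleusSub mul) := ⟨one, h1⟩ with hE
      set Z : ↥(rightNucleusSub mul) := ⟨z, hz⟩ with hZ
      have li : LinearIndependent k ![E, Z] := by
        rw [LinearIndependent.pair_iff]
        intro s t hst
        have hst' : s • one + t • z = 0 := by
          have := congrArg Subtype.val hst
          simpa using this
        have ht : t = 0 := by
          by_contra ht
          apply hzsp
          refine ⟨-(t⁻¹ * s), ?_⟩
          have : t • z = -(s • one) := by linear_combination (norm := module) hst'
          calc z = t⁻¹ • (t • z) := by rw [smul_smul, inv_mul_cancel₀ ht, one_smul]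
            _ = -(t⁻¹ * s) • one := by rw [this, smul_neg, smul_smul, neg_smul]
        rw [ht, zero_smul, add_zero] at hst'
        rcases smul_eq_zero.mp hst' with h | h
        · exact ⟨h, ht⟩
        · exact absurd h hone0
      have hsp := li.span_eq_top_of_card_eq_finrank (by simpa using hdim.symm)
      have hWmem : (⟨w, hw⟩ : ↥(rightNucleusSub mul)) ∈
          Submodule.span k ({E, Z} : Set ↥(rightNucleusSub mul)) := by
        rw [← Matrix.range_cons_cons_empty E Z ![]]
        rw [hsp]
        exact Submodule.mem_top
      obtain ⟨a, b, hab⟩ := Submodule.mem_span_pair.mp hWmem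
      have hab' : a • one + b • z = w := by
        have := congrArg Subtype.val hab
        simpa using this
      rw [← hab']
      simp [map_smul, map_add, (hone z).1, (hone z).2]
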